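/- Dephasing does not increase ergotropy: if ρ is a density matrix and Δ(ρ) := Σᵢ ⟨εᵢ|ρ|εᵢ⟩ |εᵢ⟩⟨εᵢ| is its dephased version in an eigenbasis {|εᵢ⟩} of H, then E(Δ(ρ)) ≤ E(ρ) and A(Δ(ρ)) ≤ A(ρ). -/

import Mathlib

open Matrix
open scoped BigOperators ComplexOrder

noncomputable def energy {d : ℕ} (H ρ : Matrix (Fin d) (Fin d) ℂ) : ℝ :=
  (Matrix.trace (ρ * H)).re

noncomputable def ergotropy {d : ℕ} (H ρ : Matrix (Fin d) (Fin d) ℂ) : ℝ :=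
  energy H ρ - ⨅ U : Matrix.unitaryGroup (Fin d) ℂ,
    energy H ((U : Matrix (Fin d) (Fin d) ℂ) * ρ * star (U : Matrix (Fin d) (Fin d) ℂ))

noncomputable def antiErgotropy {d : ℕ} (H ρ : Matrix (Fin d) (Fin d) ℂ) : ℝ :=
  (⨆ U : Matrix.unitaryGroup (Fin d) ℂ,
    energy H ((U : Matrix (Fin d) (Fin d) ℂ) * ρ * star (U : Matrix (Fin d) (Fin d) ℂ))) - energy H ρ

noncomputable def minErg {d : ℕ} (H : Matrix (Fin d) (Fin d) ℂ) (E : ℝ) : ℝ :=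
  sInf {x : ℝ | ∃ ρ : Matrix (Fin d) (Fin d) ℂ,
    ρ.PosSemidef ∧ ρ.trace = 1 ∧ energy H ρ = E ∧ ergotropy H ρ = x}

/-! ### Auxiliary lemmas -/

noncomputable def ph (d : ℕ) (k : Fin d) : Matrix (Fin d) (Fin d) ℂ :=
  Matrix.diagonal (fun i : Fin d => Complex.exp (2 * Real.pi * Complex.I / d) ^ ((k : ℤ) * (i : ℤ)))

lemma ph_star (d : ℕ) (k : Fin d) :
    star (ph d k) = Matrix.diagonal
      (fun i : Fin d => Complex.exp (2 * Real.pi * Complex.I / d) ^ (-((k : ℤ) * (i : ℤ)))) := by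
  set ω := Complex.exp (2 * Real.pi * Complex.I / d) with hω
  have hconj : (starRingEnd ℂ) ω = ω⁻¹ := by
    rw [hω, ← Complex.exp_conj]
    rw [← Complex.exp_neg]
    congr 1
    rw [map_div₀, _root_.map_mul, _root_.map_mul, Complex.conj_I]
    simp only [Complex.conj_ofReal, map_ofNat, Complex.conj_natCast]
    ring
  rw [ph, Matrix.star_eq_conjTranspose, Matrix.diagonal_conjTranspose]
  ext i
  simp only [Matrix.diagonal_apply]
  split
  · rw [Pi.star_apply, RCLike.star_def, map_zpow₀, hconj, _root_.inv_zpow, ← _root_.zpow_neg]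
  · rfl

lemma ph_mem (d : ℕ) (k : Fin d) : ph d k ∈ Matrix.unitaryGroup (Fin d) ℂ := by
  rw [Matrix.mem_unitaryGroup_iff, ph_star, ph, Matrix.diagonal_mul_diagonal]
  have hne : Complex.exp (2 * Real.pi * Complex.I / d) ≠ 0 := Complex.exp_ne_zero _
  convert Matrix.diagonal_one with i
  rw [← zpow_add₀ hne]
  simp

lemma pinching {d : ℕ} (hd : d ≠ 0) (τ : Matrix (Fin d) (Fin d) ℂ) :
    Matrix.diagonal (fun i => τ i i) =
      (d : ℂ)⁻¹ • ∑ k : Fin d, ph d k * τ * star (ph d k) := by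
  have hprim := Complex.isPrimitiveRoot_exp d hd
  set ω := Complex.exp (2 * Real.pi * Complex.I / d) with hω
  have hne : ω ≠ 0 := Complex.exp_ne_zero _
  ext i j
  have hentry : ∀ k : Fin d, (ph d k * τ * star (ph d k)) i j
      = (ω ^ ((i:ℤ) - (j:ℤ))) ^ (k : ℕ) * τ i j := by
    intro k
    rw [ph_star, ph, Matrix.mul_diagonal, Matrix.diagonal_mul,
      ← zpow_natCast (ω ^ ((i:ℤ)-(j:ℤ))), ← _root_.zpow_mul]
    have h1 : ω ^ ((k:ℤ)*(i:ℤ)) * τ i j * ω ^ (-((k:ℤ)*(j:ℤ)))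
        = (ω ^ ((k:ℤ)*(i:ℤ)) * ω ^ (-((k:ℤ)*(j:ℤ)))) * τ i j := by ring
    rw [h1, ← zpow_add₀ hne]
    have h2 : (k:ℤ)*(i:ℤ) + -((k:ℤ)*(j:ℤ)) = ((i:ℤ)-(j:ℤ)) * (k:ℤ) := by ring
    rw [h2]
  rw [Matrix.smul_apply, Matrix.sum_apply]
  simp only [hentry]
  rw [← Finset.sum_mul]
  by_cases hij : i = j
  · subst hij
    rw [Matrix.diagonal_apply_eq, sub_self]
    simp only [zpow_zero, one_pow]
    rw [Finset.sum_const, Finset.card_univ, Fintype.card_fin, nsmul_eq_mul, mul_one]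
    rw [smul_eq_mul, ← mul_assoc, inv_mul_cancel₀ (by exact_mod_cast hd : (d:ℂ) ≠ 0), one_mul]
  · rw [Matrix.diagonal_apply_ne _ hij]
    have hη1 : ω ^ ((i:ℤ) - (j:ℤ)) ≠ 1 := by
      rw [Ne, hprim.zpow_eq_one_iff_dvd]
      intro hdvd
      have h0 : ((i:ℤ) - (j:ℤ)) = 0 := by
        refine Int.eq_zero_of_dvd_of_natAbs_lt_natAbs hdvd ?_
        have hi := i.isLt
        have hj := j.isLt
        omega
      have : (i:ℤ) = (j:ℤ) := by omega
      exact hij (Fin.ext (by exact_mod_cast this))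
    have hηd : (ω ^ ((i:ℤ) - (j:ℤ))) ^ (d:ℕ) = 1 := by
      rw [← zpow_natCast, ← _root_.zpow_mul, mul_comm, _root_.zpow_mul, zpow_natCast,
        hprim.pow_eq_one, _root_.one_zpow]
    rw [Fin.sum_univ_eq_sum_range (fun k => (ω ^ ((i:ℤ)-(j:ℤ)))^k)]
    rw [geom_sum_eq hη1, hηd, sub_self, zero_div, zero_mul, smul_zero]

lemma psd_diag_nonneg {d : ℕ} {M : Matrix (Fin d) (Fin d) ℂ} (hM : M.PosSemidef) (a : Fin d) :
    0 ≤ M a a := by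
  have h := hM.dotProduct_mulVec_nonneg (Pi.single a 1)
  simpa [← Pi.single_star, Matrix.mulVec_single, single_dotProduct] using h

lemma psd_entry_bound {d : ℕ} {M : Matrix (Fin d) (Fin d) ℂ} (hM : M.PosSemidef)
    (htr : M.trace = 1) (i j : Fin d) : ‖M i j‖ ≤ 2 := by
  have hdiag : ∀ a : Fin d, 0 ≤ (M a a).re ∧ (M a a).im = 0 := by
    intro a
    have h := psd_diag_nonneg hM a
    rw [Complex.le_def] at h
    simp only [Complex.zero_re, Complex.zero_im] at h
    exact ⟨h.1, h.2.symm⟩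
  have hle1 : ∀ a : Fin d, (M a a).re ≤ 1 := by
    intro a
    have hsum : ∑ b : Fin d, (M b b).re = 1 := by
      have : (M.trace).re = 1 := by rw [htr]; simp
      rw [Matrix.trace] at this
      simpa [Complex.re_sum] using this
    have := Finset.single_le_sum (f := fun b => (M b b).re)
      (fun b _ => (hdiag b).1) (Finset.mem_univ a)
    linarith [hsum ▸ this]
  by_cases hij : i = j
  · subst hij
    have h1 := (hdiag i).1
    have h2 := (hdiag i).2
    calc ‖M i i‖ ≤ |(M i i).re| + |(M i i).im| := Complex.norm_le_abs_re_add_abs_im _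
      _ ≤ 2 := by rw [h2]; rw [_root_.abs_of_nonneg h1]; simp; linarith [hle1 i]
  · have hji : M j i = (starRingEnd ℂ) (M i j) := by
      have := congrFun (congrFun hM.1 j) i
      simpa [Matrix.conjTranspose_apply] using this.symm
    have key : ∀ c : ℂ, 0 ≤ (M i i).re + (M i j * c).re + ((starRingEnd ℂ) c * M j i).re
        + ((starRingEnd ℂ) c * (M j j * c)).re := by
      intro c
      have h := hM.dotProduct_mulVec_nonneg (Pi.single i 1 + Pi.single j c)
      have hexp : star (Pi.single i 1 + Pi.single j c) ⬝ᵥ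
          (M *ᵥ (Pi.single i 1 + Pi.single j c)) =
          M i i + M i j * c + (starRingEnd ℂ) c * M j i + (starRingEnd ℂ) c * (M j j * c) := by
        rw [star_add, ← Pi.single_star, ← Pi.single_star, Matrix.mulVec_add,
          Matrix.mulVec_single, Matrix.mulVec_single]
        simp only [add_dotProduct, dotProduct_add, single_dotProduct]
        simp only [star_one, RCLike.star_def, Pi.add_apply, Pi.smul_apply, op_smul_eq_mul, Matrix.col_apply]
        ring_nf
      rw [hexp, Complex.le_def] at h
      simpa using h.1
    have hre1 := key 1
    have hre2 := key (-1)
    have him1 := key Complex.I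
    have him2 := key (-Complex.I)
    rw [hji] at hre1 hre2 him1 him2
    have himj := (hdiag j).2
    simp only [Complex.mul_re, Complex.mul_im, Complex.conj_re, Complex.conj_im,
      Complex.I_re, Complex.I_im, Complex.one_re, Complex.one_im, Complex.neg_re,
      Complex.neg_im, himj] at hre1 hre2 him1 him2
    calc ‖M i j‖ ≤ |(M i j).re| + |(M i j).im| := Complex.norm_le_abs_re_add_abs_im _
      _ ≤ 2 := by
        have hii := hle1 i; have hjj := hle1 j
        have hi0 := (hdiag i).1; have hj0 := (hdiag j).1
        rcases abs_cases (M i j).re with ⟨h1, _⟩ | ⟨h1, _⟩ <;>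
          rcases abs_cases (M i j).im with ⟨h2, _⟩ | ⟨h2, _⟩ <;>
          rw [h1, h2] <;> linarith

lemma energy_abs_bound {d : ℕ} (H M : Matrix (Fin d) (Fin d) ℂ) (hM : M.PosSemidef)
    (htr : M.trace = 1) :
    |energy H M| ≤ ∑ i : Fin d, ∑ j : Fin d, 2 * ‖H j i‖ := by
  rw [energy, Matrix.trace]
  simp only [Matrix.diag_apply, Matrix.mul_apply, Complex.re_sum]
  calc |∑ i : Fin d, ∑ j : Fin d, (M i j * H j i).re|
      ≤ ∑ i : Fin d, |∑ j : Fin d, (M i j * H j i).re| := Finset.abs_sum_le_sum_abs _ _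
    _ ≤ ∑ i : Fin d, ∑ j : Fin d, |(M i j * H j i).re| :=
        Finset.sum_le_sum (fun i _ => Finset.abs_sum_le_sum_abs _ _)
    _ ≤ ∑ i : Fin d, ∑ j : Fin d, 2 * ‖H j i‖ := by
        refine Finset.sum_le_sum (fun i _ => Finset.sum_le_sum (fun j _ => ?_))
        calc |(M i j * H j i).re| ≤ ‖M i j * H j i‖ := Complex.abs_re_le_norm _
          _ = ‖M i j‖ * ‖H j i‖ := norm_mul _ _
          _ ≤ 2 * ‖H j i‖ := by
              apply mul_le_mul_of_nonneg_right (psd_entry_bound hM htr i j)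
              exact norm_nonneg _

lemma unitary_conj_psd {d : ℕ} {ρ : Matrix (Fin d) (Fin d) ℂ} (hρ : ρ.PosSemidef)
    (ht : ρ.trace = 1) (U : Matrix.unitaryGroup (Fin d) ℂ) :
    ((U : Matrix (Fin d) (Fin d) ℂ) * ρ * star (U : Matrix (Fin d) (Fin d) ℂ)).PosSemidef ∧
    ((U : Matrix (Fin d) (Fin d) ℂ) * ρ * star (U : Matrix (Fin d) (Fin d) ℂ)).trace = 1 := by
  constructor
  · have := hρ.mul_mul_conjTranspose_same (U : Matrix (Fin d) (Fin d) ℂ)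
    simpa [Matrix.star_eq_conjTranspose] using this
  · rw [Matrix.trace_mul_cycle, Matrix.UnitaryGroup.star_mul_self U, Matrix.one_mul, ht]

lemma energy_bdd {d : ℕ} (H ρ : Matrix (Fin d) (Fin d) ℂ) (hρ : ρ.PosSemidef)
    (ht : ρ.trace = 1) :
    BddBelow (Set.range fun U : Matrix.unitaryGroup (Fin d) ℂ =>
      energy H ((U : Matrix (Fin d) (Fin d) ℂ) * ρ * star (U : Matrix (Fin d) (Fin d) ℂ))) ∧
    BddAbove (Set.range fun U : Matrix.unitaryGroup (Fin d) ℂ =>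
      energy H ((U : Matrix (Fin d) (Fin d) ℂ) * ρ * star (U : Matrix (Fin d) (Fin d) ℂ))) := by
  set C := ∑ i : Fin d, ∑ j : Fin d, 2 * ‖H j i‖ with hC
  have hb : ∀ U : Matrix.unitaryGroup (Fin d) ℂ,
      |energy H ((U : Matrix (Fin d) (Fin d) ℂ) * ρ * star (U : Matrix (Fin d) (Fin d) ℂ))| ≤ C :=
    fun U => energy_abs_bound H _ (unitary_conj_psd hρ ht U).1 (unitary_conj_psd hρ ht U).2
  constructor
  · refine ⟨-C, ?_⟩
    rintro y ⟨U, rfl⟩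
    have := hb U
    rw [abs_le] at this
    exact this.1
  · refine ⟨C, ?_⟩
    rintro y ⟨U, rfl⟩
    have := hb U
    rw [abs_le] at this
    exact this.2

lemma energy_smul_sum {d : ℕ} (H : Matrix (Fin d) (Fin d) ℂ)
    (A : Fin d → Matrix (Fin d) (Fin d) ℂ) :
    energy H ((d : ℂ)⁻¹ • ∑ k : Fin d, A k) = (d : ℝ)⁻¹ * ∑ k : Fin d, energy H (A k) := by
  rw [energy, Matrix.smul_mul, Matrix.trace_smul, Finset.sum_mul, Matrix.trace_sum]
  have : ((d : ℂ))⁻¹ = ((((d : ℝ))⁻¹ : ℝ) : ℂ) := by push_cast; ring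
  rw [this, smul_eq_mul, Complex.re_ofReal_mul, Complex.re_sum]
  rfl

set_option maxHeartbeats 2000000 in
/-- Dephasing in an eigenbasis of H does not increase ergotropy nor anti-ergotropy. -/
theorem dephasing_le {d : ℕ} (H ρ : Matrix (Fin d) (Fin d) ℂ) (hH : H.IsHermitian)
    (hρ : ρ.PosSemidef) (ht : ρ.trace = 1)
    (V : Matrix.unitaryGroup (Fin d) ℂ)
    (hdiag : ∃ e : Fin d → ℝ,
      star (V : Matrix (Fin d) (Fin d) ℂ) * H * (V : Matrix (Fin d) (Fin d) ℂ)
        = Matrix.diagonal (fun i => (e i : ℂ))) :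
    ergotropy H ((V : Matrix (Fin d) (Fin d) ℂ) *
        Matrix.diagonal (fun i =>
          (star (V : Matrix (Fin d) (Fin d) ℂ) * ρ * (V : Matrix (Fin d) (Fin d) ℂ)) i i) *
        star (V : Matrix (Fin d) (Fin d) ℂ)) ≤ ergotropy H ρ ∧
    antiErgotropy H ((V : Matrix (Fin d) (Fin d) ℂ) *
        Matrix.diagonal (fun i =>
          (star (V : Matrix (Fin d) (Fin d) ℂ) * ρ * (V : Matrix (Fin d) (Fin d) ℂ)) i i) *
        star (V : Matrix (Fin d) (Fin d) ℂ)) ≤ antiErgotropy H ρ := by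
  rcases Nat.eq_zero_or_pos d with hd0 | hdpos
  · subst hd0
    rw [Matrix.trace] at ht
    simp at ht
  have hd : d ≠ 0 := hdpos.ne'
  obtain ⟨e, he⟩ := hdiag
  set Vm := (V : Matrix (Fin d) (Fin d) ℂ) with hVm
  have hV1 : star Vm * Vm = 1 := Matrix.UnitaryGroup.star_mul_self V
  have hV2 : Vm * star Vm = 1 := V.2.2
  set τ := star Vm * ρ * Vm with hτ
  set σ := Vm * Matrix.diagonal (fun i => τ i i) * star Vm with hσ
  have hρVm : ρ = Vm * τ * star Vm := by
    rw [hτ]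
    simp only [← Matrix.mul_assoc]
    rw [hV2, Matrix.one_mul, Matrix.mul_assoc, hV2, Matrix.mul_one]
  -- energy equality
  have henergy : energy H σ = energy H ρ := by
    have h1 : Matrix.trace (σ * H) = Matrix.trace ((star Vm * H * Vm) *
        Matrix.diagonal (fun i => τ i i)) := by
      rw [hσ, Matrix.mul_assoc (Vm * Matrix.diagonal (fun i => τ i i)) (star Vm) H,
        Matrix.trace_mul_comm, ← Matrix.mul_assoc]
    have h2 : Matrix.trace (ρ * H) = Matrix.trace ((star Vm * H * Vm) * τ) := by
      rw [hρVm, Matrix.mul_assoc (Vm * τ) (star Vm) H, Matrix.trace_mul_comm,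
        ← Matrix.mul_assoc]
    have h3 : Matrix.trace ((Matrix.diagonal fun i => (e i : ℂ)) *
          Matrix.diagonal (fun i => τ i i))
        = Matrix.trace ((Matrix.diagonal fun i => (e i : ℂ)) * τ) := by
      rw [Matrix.diagonal_mul_diagonal, Matrix.trace_diagonal, Matrix.trace]
      refine Finset.sum_congr rfl (fun i _ => ?_)
      rw [Matrix.diag_apply, Matrix.diagonal_mul]
    rw [energy, energy, h1, h2, he, h3]
  -- decomposition of conjugated σ as average over unitaries
  set Wm : Fin d → Matrix (Fin d) (Fin d) ℂ := fun k => Vm * ph d k * star Vm with hWm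
  have hWmem : ∀ k, Wm k ∈ Matrix.unitaryGroup (Fin d) ℂ := by
    intro k
    exact mul_mem (mul_mem V.2 (ph_mem d k)) (Unitary.star_mem V.2)
  have hk : ∀ k, Wm k * ρ * star (Wm k) = Vm * (ph d k * τ * star (ph d k)) * star Vm := by
    intro k
    simp only [hWm, hτ, StarMul.star_mul, star_star, ← Matrix.mul_assoc]
  have hσdecomp : σ = (d:ℂ)⁻¹ • ∑ k : Fin d, Wm k * ρ * star (Wm k) := by
    rw [hσ, pinching hd τ, Matrix.mul_smul, Matrix.smul_mul, Finset.mul_sum, Finset.sum_mul]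
    congr 1
    refine Finset.sum_congr rfl (fun k _ => ?_)
    rw [hk k, ← Matrix.mul_assoc]
  have hUdecomp : ∀ Um : Matrix (Fin d) (Fin d) ℂ, Um * σ * star Um
      = (d:ℂ)⁻¹ • ∑ k : Fin d, (Um * Wm k) * ρ * star (Um * Wm k) := by
    intro Um
    rw [hσdecomp, Matrix.mul_smul, Matrix.smul_mul, Finset.mul_sum, Finset.sum_mul]
    congr 1
    refine Finset.sum_congr rfl (fun k _ => ?_)
    simp only [StarMul.star_mul, ← Matrix.mul_assoc]
  -- unitary group elements
  haveI : Nonempty (Matrix.unitaryGroup (Fin d) ℂ) := ⟨1⟩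
  obtain ⟨hbb, hba⟩ := energy_bdd H ρ hρ ht
  have hg : ∀ U : Matrix.unitaryGroup (Fin d) ℂ,
      energy H ((U : Matrix (Fin d) (Fin d) ℂ) * σ * star (U : Matrix (Fin d) (Fin d) ℂ))
        = (d : ℝ)⁻¹ * ∑ k : Fin d, energy H
            (((U : Matrix (Fin d) (Fin d) ℂ) * Wm k) * ρ *
              star ((U : Matrix (Fin d) (Fin d) ℂ) * Wm k)) := by
    intro U
    rw [hUdecomp, energy_smul_sum]
  clear_value Wm σ τ Vm
  have hinf : (⨅ U : Matrix.unitaryGroup (Fin d) ℂ,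
        energy H ((U : Matrix (Fin d) (Fin d) ℂ) * ρ * star (U : Matrix (Fin d) (Fin d) ℂ)))
      ≤ ⨅ U : Matrix.unitaryGroup (Fin d) ℂ,
        energy H ((U : Matrix (Fin d) (Fin d) ℂ) * σ * star (U : Matrix (Fin d) (Fin d) ℂ)) := by
    refine le_ciInf (fun U => ?_)
    rw [hg U]
    set m := ⨅ U : Matrix.unitaryGroup (Fin d) ℂ,
        energy H ((U : Matrix (Fin d) (Fin d) ℂ) * ρ * star (U : Matrix (Fin d) (Fin d) ℂ)) with hm
    have h2 : (d : ℝ) * m ≤ ∑ k : Fin d, energy H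
        (((U : Matrix (Fin d) (Fin d) ℂ) * Wm k) * ρ *
          star ((U : Matrix (Fin d) (Fin d) ℂ) * Wm k)) := by
      have hconst : (d : ℝ) * m = ∑ _k : Fin d, m := by
        rw [Finset.sum_const, Finset.card_univ, Fintype.card_fin, nsmul_eq_mul]
      rw [hconst]
      refine Finset.sum_le_sum (fun k _ => ?_)
      have h := ciInf_le hbb (U * ⟨Wm k, hWmem k⟩)
      rwa [Matrix.UnitaryGroup.mul_val] at h
    have h3 : m = (d : ℝ)⁻¹ * ((d : ℝ) * m) := by
      field_simp
    rw [h3]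
    exact mul_le_mul_of_nonneg_left h2 (by positivity)
  have hsup : (⨆ U : Matrix.unitaryGroup (Fin d) ℂ,
        energy H ((U : Matrix (Fin d) (Fin d) ℂ) * σ * star (U : Matrix (Fin d) (Fin d) ℂ)))
      ≤ ⨆ U : Matrix.unitaryGroup (Fin d) ℂ,
        energy H ((U : Matrix (Fin d) (Fin d) ℂ) * ρ * star (U : Matrix (Fin d) (Fin d) ℂ)) := by
    refine ciSup_le (fun U => ?_)
    rw [hg U]
    set m := ⨆ U : Matrix.unitaryGroup (Fin d) ℂ,
        energy H ((U : Matrix (Fin d) (Fin d) ℂ) * ρ * star (U : Matrix (Fin d) (Fin d) ℂ)) with hm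
    have h2 : (∑ k : Fin d, energy H
        (((U : Matrix (Fin d) (Fin d) ℂ) * Wm k) * ρ *
          star ((U : Matrix (Fin d) (Fin d) ℂ) * Wm k))) ≤ (d : ℝ) * m := by
      have hconst : (d : ℝ) * m = ∑ _k : Fin d, m := by
        rw [Finset.sum_const, Finset.card_univ, Fintype.card_fin, nsmul_eq_mul]
      rw [hconst]
      refine Finset.sum_le_sum (fun k _ => ?_)
      have h := le_ciSup hba (U * ⟨Wm k, hWmem k⟩)
      rwa [Matrix.UnitaryGroup.mul_val] at h
    have h3 : m = (d : ℝ)⁻¹ * ((d : ℝ) * m) := by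
      field_simp
    rw [h3]
    exact mul_le_mul_of_nonneg_left h2 (by positivity)
  constructor
  · simp only [ergotropy]
    linarith [hinf, henergy]
  · simp only [antiErgotropy]
    linarith [hsup, henergy]
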